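/- Fix parameters (c_σ, b_σ), (c_μ, b_μ), (c_ν, b_ν) with c_σ, c_μ, c_ν > 0 and b_σ, b_μ, b_ν ∈ ℝ∖{0}, and let Φ⁺ be the associated one-dimensional phase. Then for every K ≥ 1 there exists C > 0, depending on K and the parameters, such that for every α ∈ ℝ with |α| ∈ [K^{−1}, K] and every ε > 0, the Lebesgue measure of the set {β ∈ ℝ : |β| ∈ [K^{−1}, K], |α−β| ∈ [K^{−1}, K], |Φ⁺(α,β)| ≤ ε} is at most C ε^{1/3}. -/

import Mathlib

open MeasureTheory

noncomputable section

/-- `Λ_τ(x) = sgn(b_τ)·√(c_τ² x² + b_τ²)` on the real line. -/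
def Lam1 (c b x : ℝ) : ℝ := Real.sign b * Real.sqrt (c ^ 2 * x ^ 2 + b ^ 2)

/-- The one-dimensional phase `Φ⁺(α,β) = Λ_σ(α) − Λ_μ(α−β) − Λ_ν(β)`. -/
def PhiP (cσ bσ cμ bμ cν bν α β : ℝ) : ℝ :=
  Lam1 cσ bσ α - Lam1 cμ bμ (α - β) - Lam1 cν bν β





lemma gap_vol {S : Set ℝ} {a b L : ℝ} (hS : S ⊆ Set.Icc a b)
    (h : ∀ x ∈ S, ∀ y ∈ S, x ≤ y → y - x ≤ L) :
    volume S ≤ ENNReal.ofReal L := by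
  rcases S.eq_empty_or_nonempty with rfl | ⟨s0, hs0⟩
  · simp
  have hbdd : BddBelow S := ⟨a, fun x hx => (hS hx).1⟩
  set m := sInf S with hm
  have hsub : S ⊆ Set.Icc m (m + L) := by
    intro s hs
    refine ⟨csInf_le hbdd hs, ?_⟩
    have hL0 : 0 ≤ L := by have := h s0 hs0 s0 hs0 le_rfl; linarith
    have hlow : s - L ≤ m := by
      apply le_csInf ⟨s0, hs0⟩
      intro t ht
      rcases le_total t s with h1 | h1
      · have := h t ht s hs h1; linarith
      · linarith
    linarith
  calc volume S ≤ volume (Set.Icc m (m + L)) := measure_mono hsub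
    _ = ENNReal.ofReal (m + L - m) := Real.volume_Icc
    _ = ENNReal.ofReal L := by ring_nf

lemma mvt_lb {f f' : ℝ → ℝ} (hd : ∀ x, HasDerivAt f (f' x) x) {a b lam : ℝ}
    (h : ∀ x ∈ Set.Icc a b, lam ≤ f' x) :
    ∀ x ∈ Set.Icc a b, ∀ y ∈ Set.Icc a b, x ≤ y → lam * (y - x) ≤ f y - f x := by
  have hcont : ContinuousOn f (Set.Icc a b) :=
    fun x _ => (hd x).continuousAt.continuousWithinAt
  have hdiff : DifferentiableOn ℝ f (interior (Set.Icc a b)) :=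
    fun x _ => (hd x).differentiableAt.differentiableWithinAt
  exact (convex_Icc a b).mul_sub_le_image_sub_of_le_deriv hcont hdiff
    (fun x hx => by rw [(hd x).deriv]; exact h x (interior_subset hx))

lemma sign_dichotomy {g : ℝ → ℝ} (hc : Continuous g) {a b lam : ℝ} (hlam : 0 < lam)
    (h : ∀ x ∈ Set.Icc a b, lam ≤ |g x|) :
    (∀ x ∈ Set.Icc a b, lam ≤ g x) ∨ (∀ x ∈ Set.Icc a b, g x ≤ -lam) := by
  by_contra hcon
  push_neg at hcon
  obtain ⟨⟨x, hx, hx2⟩, ⟨y, hy, hy2⟩⟩ := hcon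
  have hgx : g x ≤ -lam := by
    rcases abs_cases (g x) with ⟨he, _⟩ | ⟨he, _⟩
    · have := h x hx; rw [he] at this; linarith
    · have := h x hx; rw [he] at this; linarith
  have hgy : lam ≤ g y := by
    rcases abs_cases (g y) with ⟨he, _⟩ | ⟨he, _⟩
    · have := h y hy; rw [he] at this; linarith
    · have := h y hy; rw [he] at this; linarith
  have huIcc : Set.uIcc x y ⊆ Set.Icc a b := Set.uIcc_subset_Icc hx hy
  have h0 : (0:ℝ) ∈ Set.uIcc (g x) (g y) := by
    rw [Set.mem_uIcc]; left; constructor <;> linarith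
  obtain ⟨z, hz, hz0⟩ := intermediate_value_uIcc (hc.continuousOn (s := Set.uIcc x y)) h0
  have := h z (huIcc hz)
  rw [hz0] at this
  simp at this; linarith
lemma sub1 {f f' : ℝ → ℝ} (hd : ∀ x, HasDerivAt f (f' x) x) (hc : Continuous f')
    {a b lam ε : ℝ} (hlam : 0 < lam)
    (h : ∀ x ∈ Set.Icc a b, lam ≤ |f' x|) :
    volume {x ∈ Set.Icc a b | |f x| ≤ ε} ≤ ENNReal.ofReal (2 * ε / lam) := by
  have key : ∀ F F' : ℝ → ℝ, (∀ x, HasDerivAt F (F' x) x) →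
      (∀ x ∈ Set.Icc a b, lam ≤ F' x) →
      volume {x ∈ Set.Icc a b | |F x| ≤ ε} ≤ ENNReal.ofReal (2 * ε / lam) := by
    intro F F' hdF hlb
    apply gap_vol (fun x hx => hx.1)
    intro x hx y hy hxy
    have hmvt := mvt_lb hdF hlb x hx.1 y hy.1 hxy
    have h1 := abs_le.mp hx.2
    have h2 := abs_le.mp hy.2
    rw [le_div_iff₀ hlam]
    nlinarith
  rcases sign_dichotomy hc hlam h with hpos | hneg
  · exact key f f' hd hpos
  · have := key (fun x => -f x) (fun x => -f' x) (fun x => (hd x).neg)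
      (fun x hx => by have := hneg x hx; simp; linarith)
    simpa [abs_neg] using this

lemma sub2core {f f' f'' : ℝ → ℝ} (hd1 : ∀ x, HasDerivAt f (f' x) x)
    (hd2 : ∀ x, HasDerivAt f' (f'' x) x) {a b lam ρ ε : ℝ} {T : Set ℝ}
    (hT : T ⊆ Set.Icc a b) (hconv : ∀ x ∈ T, ∀ y ∈ T, Set.Icc x y ⊆ T)
    (hlam : 0 < lam) (hρ : 0 < ρ) (hε : 0 ≤ ε)
    (hlb : ∀ x ∈ T, lam ≤ f'' x) :
    volume {x ∈ T | |f x| ≤ ε} ≤ ENNReal.ofReal (2 * ρ / lam + 4 * ε / ρ) := by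
  -- monotonicity of f' on T
  have hmono : ∀ x ∈ T, ∀ t ∈ T, x ≤ t → f' x ≤ f' t := by
    intro x hx t ht hxt
    have := mvt_lb hd2 (a := x) (b := t)
      (fun z hz => hlb z (hconv x hx t ht hz)) x ⟨le_rfl, hxt⟩ t ⟨hxt, le_rfl⟩ hxt
    nlinarith
  set S := {x ∈ T | |f x| ≤ ε} with hSdef
  set S1 := {x ∈ S | |f' x| ≤ ρ} with hS1
  set S2 := {x ∈ S | ρ ≤ f' x} with hS2
  set S3 := {x ∈ S | f' x ≤ -ρ} with hS3
  have hcov : S ⊆ S1 ∪ S2 ∪ S3 := by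
    intro x hx
    rcases le_or_gt |f' x| ρ with h1 | h1
    · exact Or.inl (Or.inl ⟨hx, h1⟩)
    rcases le_or_gt ρ (f' x) with h2 | h2
    · exact Or.inl (Or.inr ⟨hx, h2⟩)
    · refine Or.inr ⟨hx, ?_⟩
      rcases abs_cases (f' x) with ⟨he, _⟩ | ⟨he, _⟩
      · rw [he] at h1; linarith
      · rw [he] at h1; linarith
  have hv1 : volume S1 ≤ ENNReal.ofReal (2 * ρ / lam) := by
    apply gap_vol (fun x hx => hT hx.1.1)
    intro x hx y hy hxy
    have hmvt := mvt_lb hd2 (a := x) (b := y)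
      (fun z hz => hlb z (hconv x hx.1.1 y hy.1.1 hz)) x ⟨le_rfl, hxy⟩ y ⟨hxy, le_rfl⟩ hxy
    have h1 := abs_le.mp hx.2
    have h2 := abs_le.mp hy.2
    rw [le_div_iff₀ hlam]
    nlinarith
  have hv2 : volume S2 ≤ ENNReal.ofReal (2 * ε / ρ) := by
    apply gap_vol (fun x hx => hT hx.1.1)
    intro x hx y hy hxy
    have hρt : ∀ t ∈ Set.Icc x y, ρ ≤ f' t := by
      intro t ht
      exact le_trans hx.2 (hmono x hx.1.1 t (hconv x hx.1.1 y hy.1.1 ht) ht.1)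
    have hmvt := mvt_lb hd1 (a := x) (b := y) hρt x ⟨le_rfl, hxy⟩ y ⟨hxy, le_rfl⟩ hxy
    have h1 := abs_le.mp hx.1.2
    have h2 := abs_le.mp hy.1.2
    rw [le_div_iff₀ hρ]
    nlinarith
  have hv3 : volume S3 ≤ ENNReal.ofReal (2 * ε / ρ) := by
    apply gap_vol (fun x hx => hT hx.1.1)
    intro x hx y hy hxy
    have hρt : ∀ t ∈ Set.Icc x y, ρ ≤ -f' t := by
      intro t ht
      have := hmono t (hconv x hx.1.1 y hy.1.1 ht) y hy.1.1 ht.2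
      have := hy.2
      linarith
    have hmvt := mvt_lb (f := fun z => -f z) (f' := fun z => -f' z)
      (fun z => (hd1 z).neg) (a := x) (b := y) hρt x ⟨le_rfl, hxy⟩ y ⟨hxy, le_rfl⟩ hxy
    have h1 := abs_le.mp hx.1.2
    have h2 := abs_le.mp hy.1.2
    rw [le_div_iff₀ hρ]
    nlinarith
  calc volume S ≤ volume (S1 ∪ S2 ∪ S3) := measure_mono hcov
    _ ≤ volume (S1 ∪ S2) + volume S3 := measure_union_le _ _
    _ ≤ volume S1 + volume S2 + volume S3 := by
        gcongr; exact measure_union_le _ _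
    _ ≤ ENNReal.ofReal (2 * ρ / lam) + ENNReal.ofReal (2 * ε / ρ)
          + ENNReal.ofReal (2 * ε / ρ) := by gcongr
    _ = ENNReal.ofReal (2 * ρ / lam + 4 * ε / ρ) := by
        rw [← ENNReal.ofReal_add (by positivity) (by positivity),
          ← ENNReal.ofReal_add (by positivity) (by positivity)]
        ring_nf

lemma sub2 {f f' f'' : ℝ → ℝ} (hd1 : ∀ x, HasDerivAt f (f' x) x)
    (hd2 : ∀ x, HasDerivAt f' (f'' x) x) (hc2 : Continuous f'')
    {a b lam ρ ε : ℝ} (hlam : 0 < lam) (hρ : 0 < ρ) (hε : 0 ≤ ε)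
    (h : ∀ x ∈ Set.Icc a b, lam ≤ |f'' x|) :
    volume {x ∈ Set.Icc a b | |f x| ≤ ε} ≤ ENNReal.ofReal (2 * ρ / lam + 4 * ε / ρ) := by
  have hconv : ∀ x ∈ Set.Icc a b, ∀ y ∈ Set.Icc a b, Set.Icc x y ⊆ Set.Icc a b :=
    fun x hx y hy => Set.Icc_subset_Icc hx.1 hy.2
  rcases sign_dichotomy hc2 hlam h with hpos | hneg
  · exact sub2core hd1 hd2 (le_refl _) hconv hlam hρ hε hpos
  · have := sub2core (f := fun x => -f x) (f' := fun x => -f' x) (f'' := fun x => -f'' x)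
      (fun x => (hd1 x).neg) (fun x => (hd2 x).neg) (le_refl _) hconv hlam hρ hε
      (fun x hx => by have := hneg x hx; simp; linarith)
    simpa [abs_neg] using this

lemma sub3 {f f' f'' f''' : ℝ → ℝ} (hd1 : ∀ x, HasDerivAt f (f' x) x)
    (hd2 : ∀ x, HasDerivAt f' (f'' x) x) (hd3 : ∀ x, HasDerivAt f'' (f''' x) x)
    (hc3 : Continuous f''')
    {a b lam ρ1 ρ2 ε : ℝ} (hlam : 0 < lam) (hρ1 : 0 < ρ1) (hρ2 : 0 < ρ2) (hε : 0 ≤ ε)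
    (h : ∀ x ∈ Set.Icc a b, lam ≤ |f''' x|) :
    volume {x ∈ Set.Icc a b | |f x| ≤ ε} ≤
      ENNReal.ofReal (2 * ρ2 / lam + 2 * (2 * ρ1 / ρ2 + 4 * ε / ρ1)) := by
  have key : ∀ F F' F'' F''' : ℝ → ℝ, (∀ x, HasDerivAt F (F' x) x) →
      (∀ x, HasDerivAt F' (F'' x) x) → (∀ x, HasDerivAt F'' (F''' x) x) →
      (∀ x ∈ Set.Icc a b, lam ≤ F''' x) →
      volume {x ∈ Set.Icc a b | |F x| ≤ ε} ≤
        ENNReal.ofReal (2 * ρ2 / lam + 2 * (2 * ρ1 / ρ2 + 4 * ε / ρ1)) := by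
    intro F F' F'' F''' hD1 hD2 hD3 hlb
    have hmono : ∀ x ∈ Set.Icc a b, ∀ t ∈ Set.Icc a b, x ≤ t → F'' x ≤ F'' t := by
      intro x hx t ht hxt
      have := mvt_lb hD3 (a := x) (b := t)
        (fun z hz => hlb z (Set.Icc_subset_Icc hx.1 ht.2 hz)) x ⟨le_rfl, hxt⟩
        t ⟨hxt, le_rfl⟩ hxt
      nlinarith
    set S := {x ∈ Set.Icc a b | |F x| ≤ ε} with hSdef
    set T2 := {x ∈ Set.Icc a b | ρ2 ≤ F'' x} with hT2
    set T3 := {x ∈ Set.Icc a b | F'' x ≤ -ρ2} with hT3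
    set S1 := {x ∈ S | |F'' x| ≤ ρ2} with hS1
    have hcov : S ⊆ S1 ∪ {x ∈ T2 | |F x| ≤ ε} ∪ {x ∈ T3 | |F x| ≤ ε} := by
      intro x hx
      rcases le_or_gt |F'' x| ρ2 with h1 | h1
      · exact Or.inl (Or.inl ⟨hx, h1⟩)
      rcases le_or_gt ρ2 (F'' x) with h2 | h2
      · exact Or.inl (Or.inr ⟨⟨hx.1, h2⟩, hx.2⟩)
      · refine Or.inr ⟨⟨hx.1, ?_⟩, hx.2⟩
        rcases abs_cases (F'' x) with ⟨he, _⟩ | ⟨he, _⟩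
        · rw [he] at h1; linarith
        · rw [he] at h1; linarith
    have hv1 : volume S1 ≤ ENNReal.ofReal (2 * ρ2 / lam) := by
      apply gap_vol (fun x hx => hx.1.1)
      intro x hx y hy hxy
      have hmvt := mvt_lb hD3 (a := x) (b := y)
        (fun z hz => hlb z (Set.Icc_subset_Icc hx.1.1.1 hy.1.1.2 hz)) x ⟨le_rfl, hxy⟩
        y ⟨hxy, le_rfl⟩ hxy
      have h1 := abs_le.mp hx.2
      have h2 := abs_le.mp hy.2
      rw [le_div_iff₀ hlam]
      nlinarith
    have hv2 : volume {x ∈ T2 | |F x| ≤ ε} ≤ ENNReal.ofReal (2 * ρ1 / ρ2 + 4 * ε / ρ1) := by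
      apply sub2core hD1 hD2 (fun x hx => hx.1) ?_ hρ2 hρ1 hε (fun x hx => hx.2)
      intro x hx y hy t ht
      have hta : t ∈ Set.Icc a b := Set.Icc_subset_Icc hx.1.1 hy.1.2 ht
      exact ⟨hta, le_trans hx.2 (hmono x hx.1 t hta ht.1)⟩
    have hv3 : volume {x ∈ T3 | |F x| ≤ ε} ≤ ENNReal.ofReal (2 * ρ1 / ρ2 + 4 * ε / ρ1) := by
      have := sub2core (f := fun z => -F z) (f' := fun z => -F' z) (f'' := fun z => -F'' z)
        (fun z => (hD1 z).neg) (fun z => (hD2 z).neg) (T := T3) (a := a) (b := b)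
        (fun x hx => hx.1) ?_ hρ2 hρ1 hε ?_
      · simpa [abs_neg] using this
      · intro x hx y hy t ht
        have hta : t ∈ Set.Icc a b := Set.Icc_subset_Icc hx.1.1 hy.1.2 ht
        have := hmono t hta y hy.1 ht.2
        exact ⟨hta, by have := hy.2; linarith⟩
      · intro x hx; have := hx.2; simp; linarith
    calc volume S ≤ volume (S1 ∪ {x ∈ T2 | |F x| ≤ ε} ∪ {x ∈ T3 | |F x| ≤ ε}) :=
          measure_mono hcov
      _ ≤ volume (S1 ∪ {x ∈ T2 | |F x| ≤ ε}) + volume {x ∈ T3 | |F x| ≤ ε} :=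
          measure_union_le _ _
      _ ≤ volume S1 + volume {x ∈ T2 | |F x| ≤ ε} + volume {x ∈ T3 | |F x| ≤ ε} := by
          gcongr; exact measure_union_le _ _
      _ ≤ ENNReal.ofReal (2 * ρ2 / lam) + ENNReal.ofReal (2 * ρ1 / ρ2 + 4 * ε / ρ1)
            + ENNReal.ofReal (2 * ρ1 / ρ2 + 4 * ε / ρ1) := by gcongr
      _ = ENNReal.ofReal (2 * ρ2 / lam + 2 * (2 * ρ1 / ρ2 + 4 * ε / ρ1)) := by
          rw [← ENNReal.ofReal_add (by positivity) (by positivity),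
            ← ENNReal.ofReal_add (by positivity) (by positivity)]
          ring_nf
  rcases sign_dichotomy hc3 hlam h with hpos | hneg
  · exact key f f' f'' f''' hd1 hd2 hd3 hpos
  · have := key (fun x => -f x) (fun x => -f' x) (fun x => -f'' x) (fun x => -f''' x)
      (fun x => (hd1 x).neg) (fun x => (hd2 x).neg) (fun x => (hd3 x).neg)
      (fun x hx => by have := hneg x hx; simp; linarith)
    simpa [abs_neg] using this
def lamD1 (c b x : ℝ) : ℝ := Real.sign b * (c^2 * x / Real.sqrt (c^2*x^2+b^2))
def lamD2 (c b x : ℝ) : ℝ := Real.sign b * (c^2*b^2 / ((c^2*x^2+b^2) * Real.sqrt (c^2*x^2+b^2)))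
def lamD3 (c b x : ℝ) : ℝ :=
  Real.sign b * (-3*c^4*b^2*x / ((c^2*x^2+b^2)^2 * Real.sqrt (c^2*x^2+b^2)))

variable {c b : ℝ}

lemma Qpos (c : ℝ) (hb : b ≠ 0) (x : ℝ) : 0 < c^2*x^2+b^2 := by positivity
lemma sqrtQ_pos (c : ℝ) (hb : b ≠ 0) (x : ℝ) : 0 < Real.sqrt (c^2*x^2+b^2) :=
  Real.sqrt_pos.mpr (Qpos c hb x)
lemma sqQ (c : ℝ) (hb : b ≠ 0) (x : ℝ) :
    Real.sqrt (c^2*x^2+b^2) * Real.sqrt (c^2*x^2+b^2) = c^2*x^2+b^2 :=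
  Real.mul_self_sqrt (Qpos c hb x).le
lemma hasDerivAt_Q (c b x : ℝ) : HasDerivAt (fun y => c^2*y^2+b^2) (2*c^2*x) x := by
  have h := ((hasDerivAt_pow 2 x).const_mul (c^2)).add_const (b^2)
  refine h.congr_deriv (Eq.symm ?_)
  ring
lemma hasDerivAt_sqrtQ (c : ℝ) (hb : b ≠ 0) (x : ℝ) :
    HasDerivAt (fun y => Real.sqrt (c^2*y^2+b^2)) (c^2*x / Real.sqrt (c^2*x^2+b^2)) x := by
  have h := (hasDerivAt_Q c b x).sqrt (ne_of_gt (Qpos c hb x))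
  convert h using 1
  rw [div_eq_div_iff (ne_of_gt (sqrtQ_pos c hb x)) (by positivity)]
  ring

lemma hasDerivAt_Lam1 (c : ℝ) (hb : b ≠ 0) (x : ℝ) :
    HasDerivAt (Lam1 c b) (lamD1 c b x) x :=
  (hasDerivAt_sqrtQ c hb x).const_mul (Real.sign b)

lemma hasDerivAt_lamD1 (c : ℝ) (hb : b ≠ 0) (x : ℝ) :
    HasDerivAt (lamD1 c b) (lamD2 c b x) x := by
  have hdiv := (hasDerivAt_id x).div (hasDerivAt_sqrtQ c hb x) (ne_of_gt (sqrtQ_pos c hb x))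
  have h := hdiv.const_mul (Real.sign b * c^2)
  have hfun : lamD1 c b = fun y => Real.sign b * c^2 * (y / Real.sqrt (c^2*y^2+b^2)) := by
    funext y; unfold lamD1; ring
  rw [hfun]
  refine h.congr_deriv (Eq.symm ?_)
  unfold lamD2
  have hs := sqQ c hb x
  have h1 : Real.sqrt (c^2*x^2+b^2) ≠ 0 := ne_of_gt (sqrtQ_pos c hb x)
  have h2 : (c^2*x^2+b^2) ≠ 0 := ne_of_gt (Qpos c hb x)
  field_simp
  simp only [id]
  linear_combination (-(Real.sign b) * c^4 * x^2) * hs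

lemma hasDerivAt_lamD2 (c : ℝ) (hb : b ≠ 0) (x : ℝ) :
    HasDerivAt (lamD2 c b) (lamD3 c b x) x := by
  have hQr : HasDerivAt (fun y => (c^2*y^2+b^2) * Real.sqrt (c^2*y^2+b^2))
      ((2*c^2*x) * Real.sqrt (c^2*x^2+b^2) + (c^2*x^2+b^2) * (c^2*x / Real.sqrt (c^2*x^2+b^2)))
      x := (hasDerivAt_Q c b x).mul (hasDerivAt_sqrtQ c hb x)
  have hne : (c^2*x^2+b^2) * Real.sqrt (c^2*x^2+b^2) ≠ 0 := by
    have h1 := sqrtQ_pos c hb x; have h2 := Qpos c hb x; positivity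
  have h := (hQr.inv hne).const_mul (Real.sign b * (c^2*b^2))
  have hfun : lamD2 c b
      = fun y => Real.sign b * (c^2*b^2) * ((c^2*y^2+b^2) * Real.sqrt (c^2*y^2+b^2))⁻¹ := by
    funext y; unfold lamD2; field_simp
  rw [hfun]
  refine h.congr_deriv (Eq.symm ?_)
  unfold lamD3
  have hs := sqQ c hb x
  have h1 : Real.sqrt (c^2*x^2+b^2) ≠ 0 := ne_of_gt (sqrtQ_pos c hb x)
  have h2 : (c^2*x^2+b^2) ≠ 0 := ne_of_gt (Qpos c hb x)
  field_simp
  linear_combination (-(Real.sign b) * c^4 * x) * hs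

lemma continuous_lamD1 (c : ℝ) (hb : b ≠ 0) : Continuous (lamD1 c b) := by
  unfold lamD1
  apply continuous_const.mul
  exact Continuous.div (by continuity) (by continuity) (fun x => ne_of_gt (sqrtQ_pos c hb x))

lemma continuous_lamD2 (c : ℝ) (hb : b ≠ 0) : Continuous (lamD2 c b) := by
  unfold lamD2
  apply continuous_const.mul
  refine Continuous.div (by continuity) (by continuity) (fun x => ?_)
  have h1 := sqrtQ_pos c hb x; have h2 := Qpos c hb x; positivity

lemma continuous_lamD3 (c : ℝ) (hb : b ≠ 0) : Continuous (lamD3 c b) := by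
  unfold lamD3
  apply continuous_const.mul
  refine Continuous.div (by continuity) (by continuity) (fun x => ?_)
  have h1 := sqrtQ_pos c hb x; have h2 := Qpos c hb x; positivity

lemma continuous_Lam1 (c b : ℝ) : Continuous (Lam1 c b) := by
  unfold Lam1
  exact continuous_const.mul (Real.continuous_sqrt.comp (by continuity))

lemma abs_Lam1_pos (c : ℝ) (hb : b ≠ 0) (x : ℝ) : 0 < |Lam1 c b x| := by
  unfold Lam1
  rw [abs_mul]
  apply mul_pos
  · rcases hb.lt_or_gt with h | h
    · rw [Real.sign_of_neg h]; norm_num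
    · rw [Real.sign_of_pos h]; norm_num
  · rw [abs_of_pos (sqrtQ_pos c hb x)]; exact sqrtQ_pos c hb x

lemma sign_sq (hb : b ≠ 0) : Real.sign b * Real.sign b = 1 := by
  rcases hb.lt_or_gt with h | h
  · rw [Real.sign_of_neg h]; norm_num
  · rw [Real.sign_of_pos h]; norm_num
lemma alg {cm bm cn bn u v rm rn : ℝ} (hcm : 0 < cm) (hcn : 0 < cn)
    (hbm : bm ≠ 0) (hbn : bn ≠ 0) (hu : u ≠ 0) (hrm : 0 < rm) (hrn : 0 < rn)
    (hQm : rm * rm = cm^2*u^2+bm^2) (hQn : rn * rn = cn^2*v^2+bn^2)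
    (e1 : cm^2*u/rm + cn^2*v/rn = 0)
    (e2 : cm^2*bm^2/((cm^2*u^2+bm^2)*rm) = cn^2*bn^2/((cn^2*v^2+bn^2)*rn))
    (e3 : (-3*cm^4*bm^2*u)/((cm^2*u^2+bm^2)^2*rm)
        + (-3*cn^4*bn^2*v)/((cn^2*v^2+bn^2)^2*rn) = 0) :
    rm = rn := by
  have hQmp : (0:ℝ) < cm^2*u^2+bm^2 := by positivity
  have hQnp : (0:ℝ) < cn^2*v^2+bn^2 := by positivity
  rw [← hQm] at e2 e3
  rw [← hQn] at e2 e3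
  have hrm' := hrm.ne'
  have hrn' := hrn.ne'
  field_simp at e1 e2 e3
  -- e1 : cm^2*u*rn = -(cn^2*v*rm)  (or similar)
  -- e2 : cm^2*bm^2*(rn*rn*rn) = cn^2*bn^2*(rm*rm*rm) (or similar)
  -- e3 : ...
  have h5 : cm^2*u*rn*(cm^2*bm^2*rn^4 - cn^2*bn^2*rm^4) = 0 := by
    linear_combination (-1/3 : ℝ)*e3 - cn^2*bn^2*rm^4*e1
  have hne : cm^2*u*rn ≠ 0 := by
    apply mul_ne_zero (mul_ne_zero (by positivity) hu) hrn'
  have e4 : cm^2*bm^2*rn^4 - cn^2*bn^2*rm^4 = 0 := by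
    rcases mul_eq_zero.mp h5 with h | h
    · exact absurd h hne
    · exact h
  have h6 : cn^2*bn^2*(rm*rm*rm)*(rn - rm) = 0 := by
    linear_combination e4 - rn*e2
  have hne2 : cn^2*bn^2*(rm*rm*rm) ≠ 0 := by positivity
  rcases mul_eq_zero.mp h6 with h | h
  · exact absurd h hne2
  · linarith

def phiD1 (cμ bμ cν bν α β : ℝ) : ℝ := lamD1 cμ bμ (α - β) - lamD1 cν bν β
def phiD2 (cμ bμ cν bν α β : ℝ) : ℝ := -lamD2 cμ bμ (α - β) - lamD2 cν bν β
def phiD3 (cμ bμ cν bν α β : ℝ) : ℝ := lamD3 cμ bμ (α - β) - lamD3 cν bν β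

section phi
variable {cσ bσ cμ bμ cν bν : ℝ}

lemma hasDerivAt_phi0 (cσ bσ : ℝ) (hbμ : bμ ≠ 0) (hbν : bν ≠ 0) (α β : ℝ) :
    HasDerivAt (fun y => PhiP cσ bσ cμ bμ cν bν α y) (phiD1 cμ bμ cν bν α β) β := by
  have hμ := (hasDerivAt_Lam1 cμ hbμ (α - β)).comp β ((hasDerivAt_id β).const_sub α)
  have hν := hasDerivAt_Lam1 cν hbν β
  have h := (hμ.const_sub (Lam1 cσ bσ α)).sub hν
  refine h.congr_deriv (Eq.symm ?_)
  unfold phiD1; ring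

lemma hasDerivAt_phi1 (hbμ : bμ ≠ 0) (hbν : bν ≠ 0) (α β : ℝ) :
    HasDerivAt (fun y => phiD1 cμ bμ cν bν α y) (phiD2 cμ bμ cν bν α β) β := by
  have hμ := (hasDerivAt_lamD1 cμ hbμ (α - β)).comp β ((hasDerivAt_id β).const_sub α)
  have hν := hasDerivAt_lamD1 cν hbν β
  have h := hμ.sub hν
  refine h.congr_deriv (Eq.symm ?_)
  unfold phiD2; ring

lemma hasDerivAt_phi2 (hbμ : bμ ≠ 0) (hbν : bν ≠ 0) (α β : ℝ) :
    HasDerivAt (fun y => phiD2 cμ bμ cν bν α y) (phiD3 cμ bμ cν bν α β) β := by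
  have hμ := (hasDerivAt_lamD2 cμ hbμ (α - β)).comp β ((hasDerivAt_id β).const_sub α)
  have hν := hasDerivAt_lamD2 cν hbν β
  have h := (hμ.neg).sub hν
  refine h.congr_deriv (Eq.symm ?_)
  unfold phiD3; ring

lemma continuous_phi0 (cσ bσ cμ bμ cν bν : ℝ) :
    Continuous (fun p : ℝ × ℝ => PhiP cσ bσ cμ bμ cν bν p.1 p.2) := by
  unfold PhiP
  exact (((continuous_Lam1 cσ bσ).comp continuous_fst).sub
    ((continuous_Lam1 cμ bμ).comp (continuous_fst.sub continuous_snd))).sub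
    ((continuous_Lam1 cν bν).comp continuous_snd)

lemma continuous_phi1 (hbμ : bμ ≠ 0) (hbν : bν ≠ 0) :
    Continuous (fun p : ℝ × ℝ => phiD1 cμ bμ cν bν p.1 p.2) := by
  unfold phiD1
  exact ((continuous_lamD1 cμ hbμ).comp (continuous_fst.sub continuous_snd)).sub
    ((continuous_lamD1 cν hbν).comp continuous_snd)

lemma continuous_phi2 (hbμ : bμ ≠ 0) (hbν : bν ≠ 0) :
    Continuous (fun p : ℝ × ℝ => phiD2 cμ bμ cν bν p.1 p.2) := by
  unfold phiD2
  exact (((continuous_lamD2 cμ hbμ).comp (continuous_fst.sub continuous_snd)).neg).sub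
    ((continuous_lamD2 cν hbν).comp continuous_snd)

lemma continuous_phi3 (hbμ : bμ ≠ 0) (hbν : bν ≠ 0) :
    Continuous (fun p : ℝ × ℝ => phiD3 cμ bμ cν bν p.1 p.2) := by
  unfold phiD3
  exact ((continuous_lamD3 cμ hbμ).comp (continuous_fst.sub continuous_snd)).sub
    ((continuous_lamD3 cν hbν).comp continuous_snd)

lemma sign_cases {b : ℝ} (hb : b ≠ 0) : Real.sign b = 1 ∨ Real.sign b = -1 := by
  rcases hb.lt_or_gt with h | h
  · right; exact Real.sign_of_neg h
  · left; exact Real.sign_of_pos h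

lemma key (hcμ : 0 < cμ) (hcν : 0 < cν) (hbσ : bσ ≠ 0) (hbμ : bμ ≠ 0) (hbν : bν ≠ 0)
    {α β : ℝ} (hu : α - β ≠ 0)
    (h0 : PhiP cσ bσ cμ bμ cν bν α β = 0)
    (h1 : phiD1 cμ bμ cν bν α β = 0)
    (h2 : phiD2 cμ bμ cν bν α β = 0)
    (h3 : phiD3 cμ bμ cν bν α β = 0) : False := by
  set u := α - β with hudef
  set v := β with hvdef
  set rμ := Real.sqrt (cμ^2*u^2+bμ^2) with hrμdef
  set rν := Real.sqrt (cν^2*v^2+bν^2) with hrνdef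
  have hrμ : 0 < rμ := sqrtQ_pos cμ hbμ u
  have hrν : 0 < rν := sqrtQ_pos cν hbν v
  have hQμ : rμ * rμ = cμ^2*u^2+bμ^2 := sqQ cμ hbμ u
  have hQν : rν * rν = cν^2*v^2+bν^2 := sqQ cν hbν v
  have hQμp : (0:ℝ) < cμ^2*u^2+bμ^2 := by positivity
  have hQνp : (0:ℝ) < cν^2*v^2+bν^2 := by positivity
  have hFμ : (0:ℝ) < cμ^2*bμ^2/((cμ^2*u^2+bμ^2)*rμ) := by positivity
  have hFν : (0:ℝ) < cν^2*bν^2/((cν^2*v^2+bν^2)*rν) := by positivity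
  unfold phiD1 at h1; unfold phiD2 at h2; unfold phiD3 at h3
  unfold lamD1 at h1; unfold lamD2 at h2; unfold lamD3 at h3
  rw [← hrμdef, ← hrνdef] at h1 h2 h3
  unfold PhiP Lam1 at h0
  rw [show cμ ^ 2 * (α - β) ^ 2 + bμ ^ 2 = cμ^2*u^2+bμ^2 by rw [← hudef],
    show cν ^ 2 * β ^ 2 + bν ^ 2 = cν^2*v^2+bν^2 by rw [← hvdef],
    ← hrμdef, ← hrνdef] at h0
  have hrmrn : rμ = rν := by
    rcases sign_cases hbμ with hsμ | hsμ <;> rcases sign_cases hbν with hsν | hsν <;>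
      rw [hsμ, hsν] at h1 h2 h3
    · exfalso; rw [one_mul, one_mul] at h2; linarith
    · refine alg hcμ hcν hbμ hbν hu hrμ hrν hQμ hQν ?_ ?_ ?_
      · linarith
      · linarith
      · linarith
    · refine alg hcμ hcν hbμ hbν hu hrμ hrν hQμ hQν ?_ ?_ ?_
      · linarith
      · linarith
      · linarith
    · exfalso; rw [neg_one_mul, neg_one_mul] at h2; linarith
  have habs := abs_Lam1_pos cσ hbσ α
  have hL0 : Lam1 cσ bσ α = 0 := by
    rcases sign_cases hbμ with hsμ | hsμ <;> rcases sign_cases hbν with hsν | hsν <;>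
      rw [hsμ, hsν] at h2
    · rw [one_mul, one_mul] at h2; linarith
    · rw [hsμ, hsν] at h0; rw [hrmrn] at h0; unfold Lam1; linarith
    · rw [hsμ, hsν] at h0; rw [hrmrn] at h0; unfold Lam1; linarith
    · rw [neg_one_mul, neg_one_mul] at h2; linarith
  rw [hL0] at habs
  simp at habs
end phi
set_option maxHeartbeats 2000000 in
/-- Sublevel-set measure bound: on a compact frequency annulus, the set of `β`
with `|Φ⁺(α,β)| ≤ ε` has measure `≲ ε^{1/3}`. -/
theorem statement7 (cσ bσ cμ bμ cν bν : ℝ)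
    (hcσ : 0 < cσ) (hcμ : 0 < cμ) (hcν : 0 < cν)
    (hbσ : bσ ≠ 0) (hbμ : bμ ≠ 0) (hbν : bν ≠ 0) :
    ∀ K : ℝ, 1 ≤ K → ∃ C : ℝ, 0 < C ∧
      ∀ α : ℝ, |α| ∈ Set.Icc K⁻¹ K → ∀ ε : ℝ, 0 < ε →
        volume {β : ℝ | |β| ∈ Set.Icc K⁻¹ K ∧ |α - β| ∈ Set.Icc K⁻¹ K ∧
            |PhiP cσ bσ cμ bμ cν bν α β| ≤ ε} ≤
          ENNReal.ofReal (C * ε ^ ((1 : ℝ) / 3)) := by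
  intro K hK
  have hK0 : (0:ℝ) < K := lt_of_lt_of_le one_pos hK
  have hKi : (0:ℝ) < K⁻¹ := by positivity
  set P0 : ℝ × ℝ → ℝ := fun p => PhiP cσ bσ cμ bμ cν bν p.1 p.2 with hP0
  set P1 : ℝ × ℝ → ℝ := fun p => phiD1 cμ bμ cν bν p.1 p.2 with hP1
  set P2 : ℝ × ℝ → ℝ := fun p => phiD2 cμ bμ cν bν p.1 p.2 with hP2
  set P3 : ℝ × ℝ → ℝ := fun p => phiD3 cμ bμ cν bν p.1 p.2 with hP3
  set D : Set (ℝ × ℝ) := ((fun p : ℝ × ℝ => |p.1|) ⁻¹' Set.Icc K⁻¹ K) ∩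
      ((fun p : ℝ × ℝ => |p.2|) ⁻¹' Set.Icc K⁻¹ K) ∩
      ((fun p : ℝ × ℝ => |p.1 - p.2|) ⁻¹' Set.Icc K⁻¹ K) with hD
  by_cases hDne : D.Nonempty
  swap
  · refine ⟨1, one_pos, fun α hα ε hε => ?_⟩
    have hempty : {β : ℝ | |β| ∈ Set.Icc K⁻¹ K ∧ |α - β| ∈ Set.Icc K⁻¹ K ∧
        |PhiP cσ bσ cμ bμ cν bν α β| ≤ ε} = ∅ := by
      rw [Set.eq_empty_iff_forall_notMem]
      intro β hβ
      exact hDne ⟨(α, β), ⟨hα, hβ.1⟩, hβ.2.1⟩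
    rw [hempty]
    simp
  set s : Set (ℝ × ℝ) := Set.Icc (-K) K ×ˢ Set.Icc (-K) K with hs
  have hscomp : IsCompact s := isCompact_Icc.prod isCompact_Icc
  have hDsub : D ⊆ s := by
    rintro p ⟨⟨h1, h2⟩, _⟩
    exact ⟨abs_le.mp h1.2, abs_le.mp h2.2⟩
  have hDclosed : IsClosed D := by
    refine IsClosed.inter (IsClosed.inter ?_ ?_) ?_ <;>
      exact isClosed_Icc.preimage (by continuity)
  have hDcomp : IsCompact D := hscomp.of_isClosed_subset hDclosed hDsub
  have hc0 : Continuous P0 := continuous_phi0 cσ bσ cμ bμ cν bν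
  have hc1 : Continuous P1 := continuous_phi1 hbμ hbν
  have hc2 : Continuous P2 := continuous_phi2 hbμ hbν
  have hc3 : Continuous P3 := continuous_phi3 hbμ hbν
  set G : ℝ × ℝ → ℝ := fun p => |P0 p| + |P1 p| + |P2 p| + |P3 p| with hG
  have hGcont : Continuous G := ((hc0.abs.add hc1.abs).add hc2.abs).add hc3.abs
  have hGpos : ∀ p ∈ D, 0 < G p := by
    rintro ⟨a, b⟩ ⟨⟨hpa, hpb⟩, hpab⟩
    have h4 : (0:ℝ) ≤ G (a, b) := by positivity
    rcases h4.lt_or_eq with h | h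
    · exact h
    exfalso
    have n0 := abs_nonneg (P0 (a, b))
    have n1 := abs_nonneg (P1 (a, b))
    have n2 := abs_nonneg (P2 (a, b))
    have n3 := abs_nonneg (P3 (a, b))
    have hGe : |P0 (a,b)| + |P1 (a,b)| + |P2 (a,b)| + |P3 (a,b)| = 0 := h.symm
    have hu : a - b ≠ 0 := by
      intro hz
      have habs : K⁻¹ ≤ |a - b| := hpab.1
      rw [hz] at habs
      simp at habs
      linarith
    exact key hcμ hcν hbσ hbμ hbν hu
      (abs_eq_zero.mp (by linarith)) (abs_eq_zero.mp (by linarith))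
      (abs_eq_zero.mp (by linarith)) (abs_eq_zero.mp (by linarith))
  obtain ⟨p0, hp0D, hp0min⟩ := hDcomp.exists_isMinOn hDne hGcont.continuousOn
  set lam : ℝ := G p0 with hlam
  have hlampos : 0 < lam := hGpos p0 hp0D
  have hlamle : ∀ p ∈ D, lam ≤ G p := fun p hp => hp0min hp
  clear_value lam
  have huc : ∀ F : ℝ × ℝ → ℝ, Continuous F → ∃ δ > 0, ∀ p ∈ s, ∀ q ∈ s,
      dist p q < δ → dist (F p) (F q) < lam / 8 := by
    intro F hF
    have h := hscomp.uniformContinuousOn_of_continuous hF.continuousOn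
    rw [Metric.uniformContinuousOn_iff] at h
    obtain ⟨δ, hδ, hh⟩ := h (lam / 8) (by positivity)
    exact ⟨δ, hδ, fun p hp q hq hpq => hh p hp q hq hpq⟩
  obtain ⟨δ0, hδ0, huc0⟩ := huc P0 hc0
  obtain ⟨δ1, hδ1, huc1⟩ := huc P1 hc1
  obtain ⟨δ2, hδ2, huc2⟩ := huc P2 hc2
  obtain ⟨δ3, hδ3, huc3⟩ := huc P3 hc3
  set δ : ℝ := min (min δ0 δ1) (min δ2 δ3) with hδdef
  have hδ : 0 < δ := lt_min (lt_min hδ0 hδ1) (lt_min hδ2 hδ3)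
  clear_value δ
  set N : ℕ := ⌈2 * K / δ⌉₊ + 1 with hN
  have hNpos : 0 < (N:ℝ) := by rw [hN]; positivity
  set η : ℝ := 2 * K / N with hη
  have hηpos : 0 < η := div_pos (by linarith) hNpos
  have hηδ : η < δ := by
    rw [hη, div_lt_iff₀ hNpos]
    have h1 : 2 * K / δ < (N : ℝ) := by
      rw [hN]
      push_cast
      exact lt_of_le_of_lt (Nat.le_ceil _) (by linarith)
    calc 2 * K = (2 * K / δ) * δ := by field_simp
      _ < (N:ℝ) * δ := mul_lt_mul_of_pos_right h1 hδ
      _ = δ * N := by ring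
  clear_value η
  set ε₀ : ℝ := min 1 (lam / 8) with hε₀
  have hε₀pos : 0 < ε₀ := lt_min one_pos (by positivity)
  set e0 : ℝ := ε₀ ^ ((1:ℝ)/3) with he0
  have he0pos : 0 < e0 := Real.rpow_pos_of_pos hε₀pos _
  clear_value e0
  set C1 : ℝ := 16 / lam + 16 with hC1
  have hC1pos : 0 < C1 := by rw [hC1]; positivity
  clear_value C1
  refine ⟨(N:ℝ) * C1 + 2 * K / e0 + 1, by positivity, ?_⟩
  intro α hα ε hε
  set r : ℝ := ε ^ ((1:ℝ)/3) with hrdef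
  have hr : 0 < r := Real.rpow_pos_of_pos hε _
  clear_value r
  set S : Set ℝ := {β : ℝ | |β| ∈ Set.Icc K⁻¹ K ∧ |α - β| ∈ Set.Icc K⁻¹ K ∧
      |PhiP cσ bσ cμ bμ cν bν α β| ≤ ε} with hSdef
  have hSsub : S ⊆ Set.Icc (-K) K := fun β hβ => abs_le.mp hβ.1.2
  have hSD : ∀ β ∈ S, (α, β) ∈ D := fun β hβ => ⟨⟨hα, hβ.1⟩, hβ.2.1⟩
  rcases le_or_gt ε₀ ε with hbig | hsmall
  · have hre : e0 ≤ r := by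
      rw [he0, hrdef]
      exact Real.rpow_le_rpow hε₀pos.le hbig (by norm_num : (0:ℝ) ≤ 1/3)
    calc volume S ≤ volume (Set.Icc (-K) K) := measure_mono hSsub
      _ = ENNReal.ofReal (2 * K) := by rw [Real.volume_Icc]; congr 1; ring
      _ ≤ ENNReal.ofReal (((N:ℝ) * C1 + 2 * K / e0 + 1) * r) := by
          apply ENNReal.ofReal_le_ofReal
          have h1 : 2 * K = (2 * K / e0) * e0 := by field_simp
          have h2 : (2 * K / e0) * e0 ≤ (2 * K / e0) * r :=
            mul_le_mul_of_nonneg_left hre (by positivity)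
          have h3 : 2 * K ≤ (2 * K / e0) * r := by rw [h1] at *; linarith
          have h4 : ((N:ℝ) * C1 + 2 * K / e0 + 1) * r
              = (N:ℝ) * C1 * r + (2 * K / e0) * r + r := by ring
          linarith [mul_pos (mul_pos hNpos hC1pos) hr, hr.le, h3, h4]
  have hε1 : ε < 1 := lt_of_lt_of_le hsmall (min_le_left _ _)
  have hεlam : ε < lam / 8 := lt_of_lt_of_le hsmall (min_le_right _ _)
  have hr1 : r ≤ 1 := by
    rw [hrdef]
    exact Real.rpow_le_one hε.le hε1.le (by norm_num : (0:ℝ) ≤ 1/3)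
  have hr3 : r * r * r = ε := by
    rw [hrdef, ← Real.rpow_add hε, ← Real.rpow_add hε]
    norm_num
  have hεr : ε ≤ r := by nlinarith
  set t : ℕ → ℝ := fun i => -K + i * η with ht
  have hcover : S ⊆ ⋃ i ∈ Finset.range N, S ∩ Set.Icc (t i) (t (i + 1)) := by
    intro β hβ
    have hβK := hSsub hβ
    set x : ℝ := (β + K) / η with hx
    have hx0 : 0 ≤ x := by
      rw [hx]
      apply div_nonneg _ hηpos.le
      linarith [hβK.1]
    have hxN : x ≤ N := by
      rw [hx, div_le_iff₀ hηpos, hη]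
      have hNη : (N:ℝ) * (2 * K / N) = 2 * K := by field_simp
      rw [hNη]
      linarith [hβK.2]
    set i : ℕ := min ⌊x⌋₊ (N - 1) with hi
    have hiN : i < N := by
      have : N - 1 < N := Nat.sub_lt (by omega) one_pos
      omega
    simp only [Set.mem_iUnion]
    refine ⟨i, Finset.mem_range.mpr hiN, hβ, ?_, ?_⟩
    · have h1 : (i:ℝ) ≤ x := by
        have hle : (i:ℝ) ≤ (⌊x⌋₊ : ℝ) := by exact_mod_cast (min_le_left ⌊x⌋₊ (N-1))
        exact le_trans hle (Nat.floor_le hx0)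
      have h2 : (i:ℝ) * η ≤ x * η := mul_le_mul_of_nonneg_right h1 hηpos.le
      rw [hx, div_mul_cancel₀ _ (ne_of_gt hηpos)] at h2
      show -K + (i:ℝ) * η ≤ β
      linarith
    · have h2 : x ≤ (i:ℝ) + 1 := by
        rcases le_or_gt ⌊x⌋₊ (N - 1) with hc | hc
        · have hieq : i = ⌊x⌋₊ := min_eq_left hc
          rw [hieq]
          exact le_of_lt (Nat.lt_floor_add_one x)
        · have hieq : i = N - 1 := min_eq_right (le_of_lt hc)
          have hNi : (i:ℝ) = (N:ℝ) - 1 := by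
            rw [hieq]
            have h1 : (1:ℕ) ≤ N := by omega
            push_cast [Nat.cast_sub h1]
            ring
          rw [hNi]
          linarith
      have h3 : x * η ≤ ((i:ℝ) + 1) * η := mul_le_mul_of_nonneg_right h2 hηpos.le
      rw [hx, div_mul_cancel₀ _ (ne_of_gt hηpos)] at h3
      show β ≤ -K + ((i:ℕ) + 1 : ℕ) * η
      push_cast
      linarith
  have hαs : α ∈ Set.Icc (-K) K := abs_le.mp hα.2
  have hlam8 : (0:ℝ) < lam / 8 := by positivity
  have hCr : C1 * r = 16 * r / lam + 16 * r := by rw [hC1]; ring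
  have h4ε : 4 * ε / (r * r) = 4 * r := by
    rw [← hr3]; field_simp
  have h2rr : 2 * (r * r) / r = 2 * r := by field_simp
  have hd8 : ∀ z : ℝ, 2 * z / (lam / 8) = 16 * z / lam := by
    intro z; rw [div_div_eq_mul_div]; ring
  have hpiece : ∀ i, i < N → volume (S ∩ Set.Icc (t i) (t (i + 1))) ≤
      ENNReal.ofReal (C1 * r) := by
    intro i hiN
    by_cases hne : (S ∩ Set.Icc (t i) (t (i + 1))).Nonempty
    swap
    · rw [Set.not_nonempty_iff_eq_empty] at hne
      rw [hne]
      simp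
    obtain ⟨β₀, hβ₀S, hβ₀J⟩ := hne
    have hJsub : Set.Icc (t i) (t (i + 1)) ⊆ Set.Icc (-K) K := by
      apply Set.Icc_subset_Icc
      · show -K ≤ -K + (i:ℝ) * η
        have : 0 ≤ (i:ℝ) * η := by positivity
        linarith
      · show -K + ((i:ℕ) + 1 : ℕ) * η ≤ K
        have h1 : ((i:ℝ) + 1) * η ≤ (N:ℝ) * η := by
          apply mul_le_mul_of_nonneg_right _ hηpos.le
          exact_mod_cast Nat.succ_le_of_lt hiN
        have hNη : (N:ℝ) * η = 2 * K := by rw [hη]; field_simp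
        push_cast
        nlinarith
    have hmemJ : ∀ y ∈ Set.Icc (t i) (t (i + 1)), (α, y) ∈ s ∧
        dist (α, y) (α, β₀) < δ := by
      intro y hy
      refine ⟨⟨hαs, hJsub hy⟩, ?_⟩
      rw [Prod.dist_eq]
      simp only [dist_self]
      rw [max_eq_right dist_nonneg, Real.dist_eq]
      have h1 : |y - β₀| ≤ t (i+1) - t i := by
        rw [abs_le]
        constructor
        · have := hy.1; have := hβ₀J.2; linarith
        · have := hy.2; have := hβ₀J.1; linarith
      have h2 : t (i+1) - t i = η := by
        show (-K + ((i:ℕ) + 1 : ℕ) * η) - (-K + (i:ℝ) * η) = η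
        push_cast
        ring
      rw [h2] at h1
      exact lt_of_le_of_lt h1 hηδ
    have hβ₀s : (α, β₀) ∈ s := ⟨hαs, hJsub hβ₀J⟩
    have hGβ₀ : lam ≤ G (α, β₀) := hlamle _ (hSD β₀ hβ₀S)
    have hδle0 : δ ≤ δ0 := by
      rw [hδdef]; exact le_trans (min_le_left _ _) (min_le_left _ _)
    have hδle1 : δ ≤ δ1 := by
      rw [hδdef]; exact le_trans (min_le_left _ _) (min_le_right _ _)
    have hδle2 : δ ≤ δ2 := by
      rw [hδdef]; exact le_trans (min_le_right _ _) (min_le_left _ _)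
    have hδle3 : δ ≤ δ3 := by
      rw [hδdef]; exact le_trans (min_le_right _ _) (min_le_right _ _)
    have hcases : lam/4 ≤ |P0 (α, β₀)| ∨ lam/4 ≤ |P1 (α, β₀)| ∨
        lam/4 ≤ |P2 (α, β₀)| ∨ lam/4 ≤ |P3 (α, β₀)| := by
      by_contra hcon
      push_neg at hcon
      obtain ⟨g0, g1, g2, g3⟩ := hcon
      simp only [hG] at hGβ₀
      linarith
    have hlow : ∀ (F : ℝ × ℝ → ℝ) (δF : ℝ), δ ≤ δF →
        (∀ p ∈ s, ∀ q ∈ s, dist p q < δF → dist (F p) (F q) < lam / 8) →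
        lam/4 ≤ |F (α, β₀)| →
        ∀ y ∈ Set.Icc (t i) (t (i + 1)), lam/8 ≤ |F (α, y)| := by
      intro F δF hδF hucF hFβ₀ y hy
      obtain ⟨hys, hydist⟩ := hmemJ y hy
      have hd := hucF _ hys _ hβ₀s (lt_of_lt_of_le hydist hδF)
      rw [Real.dist_eq] at hd
      have habs := abs_sub_abs_le_abs_sub (F (α, β₀)) (F (α, y))
      rw [abs_sub_comm] at habs
      linarith
    have hd1' : ∀ y, HasDerivAt (fun y => PhiP cσ bσ cμ bμ cν bν α y)
        (phiD1 cμ bμ cν bν α y) y := hasDerivAt_phi0 cσ bσ hbμ hbν α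
    have hd2' : ∀ y, HasDerivAt (fun y => phiD1 cμ bμ cν bν α y)
        (phiD2 cμ bμ cν bν α y) y := hasDerivAt_phi1 hbμ hbν α
    have hd3' : ∀ y, HasDerivAt (fun y => phiD2 cμ bμ cν bν α y)
        (phiD3 cμ bμ cν bν α y) y := hasDerivAt_phi2 hbμ hbν α
    have hcont1 : Continuous (fun y : ℝ => phiD1 cμ bμ cν bν α y) := by
      unfold phiD1
      exact ((continuous_lamD1 cμ hbμ).comp (continuous_const.sub continuous_id)).sub
        ((continuous_lamD1 cν hbν).comp continuous_id)
    have hcont2 : Continuous (fun y : ℝ => phiD2 cμ bμ cν bν α y) := by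
      unfold phiD2
      exact (((continuous_lamD2 cμ hbμ).comp (continuous_const.sub continuous_id)).neg).sub
        ((continuous_lamD2 cν hbν).comp continuous_id)
    have hcont3 : Continuous (fun y : ℝ => phiD3 cμ bμ cν bν α y) := by
      unfold phiD3
      exact ((continuous_lamD3 cμ hbμ).comp (continuous_const.sub continuous_id)).sub
        ((continuous_lamD3 cν hbν).comp continuous_id)
    rcases hcases with hc | hc | hc | hc
    · have hem : S ∩ Set.Icc (t i) (t (i + 1)) ⊆ (∅ : Set ℝ) := by
        intro β hβ
        have h1 := hlow P0 δ0 hδle0 huc0 hc β hβ.2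
        have h2 : |P0 (α, β)| ≤ ε := hβ.1.2.2
        exfalso
        linarith
      calc volume (S ∩ Set.Icc (t i) (t (i + 1))) ≤ volume (∅ : Set ℝ) :=
            measure_mono hem
        _ = 0 := measure_empty
        _ ≤ _ := zero_le
    · have hlow1 : ∀ y ∈ Set.Icc (t i) (t (i+1)), lam/8 ≤ |phiD1 cμ bμ cν bν α y| :=
        hlow P1 δ1 hδle1 huc1 hc
      have hb := sub1 hd1' hcont1 (a := t i) (b := t (i+1)) (ε := ε) hlam8 hlow1
      refine le_trans (le_trans (measure_mono ?_) hb) (ENNReal.ofReal_le_ofReal ?_)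
      · exact fun β hβ => ⟨hβ.2, hβ.1.2.2⟩
      · rw [hd8, hCr]
        have h1 : 16 * ε / lam ≤ 16 * r / lam :=
          (div_le_div_iff_of_pos_right hlampos).mpr (by linarith)
        have h2 : (0:ℝ) ≤ 16 * r := by positivity
        linarith
    · have hlow2 : ∀ y ∈ Set.Icc (t i) (t (i+1)), lam/8 ≤ |phiD2 cμ bμ cν bν α y| :=
        hlow P2 δ2 hδle2 huc2 hc
      have hb := sub2 hd1' hd2' hcont2
        (a := t i) (b := t (i+1)) (lam := lam/8) (ρ := r * r) (ε := ε) hlam8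
        (mul_pos hr hr) hε.le hlow2
      refine le_trans (le_trans (measure_mono ?_) hb) (ENNReal.ofReal_le_ofReal ?_)
      · exact fun β hβ => ⟨hβ.2, hβ.1.2.2⟩
      · rw [hd8, h4ε, hCr]
        have h1 : 16 * (r * r) / lam ≤ 16 * r / lam :=
          (div_le_div_iff_of_pos_right hlampos).mpr (by nlinarith)
        linarith
    · have hlow3 : ∀ y ∈ Set.Icc (t i) (t (i+1)), lam/8 ≤ |phiD3 cμ bμ cν bν α y| :=
        hlow P3 δ3 hδle3 huc3 hc
      have hb := sub3 hd1' hd2' hd3' hcont3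
        (a := t i) (b := t (i+1)) (lam := lam/8) (ρ1 := r * r) (ρ2 := r) (ε := ε)
        hlam8 (mul_pos hr hr) hr hε.le hlow3
      refine le_trans (le_trans (measure_mono ?_) hb) (ENNReal.ofReal_le_ofReal ?_)
      · exact fun β hβ => ⟨hβ.2, hβ.1.2.2⟩
      · rw [hd8, h2rr, h4ε, hCr]
        linarith
  calc volume S ≤ volume (⋃ i ∈ Finset.range N, S ∩ Set.Icc (t i) (t (i + 1))) :=
        measure_mono hcover
    _ ≤ ∑ i ∈ Finset.range N, volume (S ∩ Set.Icc (t i) (t (i + 1))) :=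
        measure_biUnion_finset_le _ _
    _ ≤ ∑ _i ∈ Finset.range N, ENNReal.ofReal (C1 * r) :=
        Finset.sum_le_sum (fun i hi => hpiece i (Finset.mem_range.mp hi))
    _ = (N : ENNReal) * ENNReal.ofReal (C1 * r) := by
        rw [Finset.sum_const, Finset.card_range, nsmul_eq_mul]
    _ ≤ ENNReal.ofReal (((N:ℝ) * C1 + 2 * K / e0 + 1) * r) := by
        rw [← ENNReal.ofReal_natCast N, ← ENNReal.ofReal_mul (by positivity)]
        apply ENNReal.ofReal_le_ofReal
        have h1 : 0 ≤ (2 * K / e0 + 1) * r := by positivity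
        nlinarith
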